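/- arXiv:1201.0148 — 4 statements merged into one kernel-verified Lean document; each statement's English description precedes it below -/
import Mathlib

section
/- Let N and M be positive integers, X = max(N, M), Y = min(N, M), let 1 ≤ K ≤ Y, let p_1 < ⋯ < p_K be indices in {1, …, Y}, and let s_1 < ⋯ < s_{Y−K} be the complementary indices. Define the marginal f(μ_{p_1}, …, μ_{p_K}), for μ_{p_1} > μ_{p_2} > ⋯ > μ_{p_K} > 0, as the Lebesgue integral of ψ(μ_1, …, μ_Y) · exp(−Σ_{j=1}^Y μ_j) over the variables μ_{s_1}, …, μ_{s_{Y−K}} ranging over all values for which the full vector satisfies μ_1 > μ_2 > ⋯ > μ_Y > 0. Then there exists a multivariate polynomial r in K variables, each of whose monomials with non-zero coefficient has total degree at least (N − p_1 + 1)(M − p_1 + 1) − K, such that f(μ_{p_1}, …, μ_{p_K}) ≤ r(μ_{p_1}, …, μ_{p_K}) · exp(−Σ_{k=1}^K μ_{p_k}) for all μ_{p_1} > ⋯ > μ_{p_K} > 0. -/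
open MeasureTheory Real Finset

/-- The polynomial factor `ψ(μ) = ∏ i μ_i^{X−Y} ∏_{i<j} (μ_i − μ_j)²` of the joint pdf of
the ordered eigenvalues of an uncorrelated central Wishart matrix, where
`X = max N M`, `Y = min N M`. -/
noncomputable def psi (N M : ℕ) (μ : Fin (min N M) → ℝ) : ℝ :=
  (∏ i, μ i ^ (max N M - min N M)) * ∏ i, ∏ j ∈ Finset.Ioi i, (μ i - μ j) ^ 2

/-- Given complementary index selections `p : Fin K → Fin Y` and `s : Fin L → Fin Y`,
assemble a full vector from the values `ν` at the `p`-indices and `t` at the `s`-indices. -/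
noncomputable def merge {Y K L : ℕ} (p : Fin K → Fin Y) (s : Fin L → Fin Y)
    (ν : Fin K → ℝ) (t : Fin L → ℝ) : Fin Y → ℝ := fun i =>
  if h : ∃ k, p k = i then ν h.choose
  else if h' : ∃ l, s l = i then t h'.choose
  else 0

lemma merge_apply_p {Y K L : ℕ} {p : Fin K → Fin Y} {s : Fin L → Fin Y}
    (hp : Function.Injective p) (ν : Fin K → ℝ) (t : Fin L → ℝ) (k : Fin K) :
    merge p s ν t (p k) = ν k := by
  have h : ∃ k', p k' = p k := ⟨k, rfl⟩
  simp only [merge, dif_pos h]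
  exact congrArg ν (hp h.choose_spec)

lemma merge_apply_s {Y K L : ℕ} {p : Fin K → Fin Y} {s : Fin L → Fin Y}
    (hs : Function.Injective s) (hns : ∀ l, ¬ ∃ k, p k = s l)
    (ν : Fin K → ℝ) (t : Fin L → ℝ) (l : Fin L) :
    merge p s ν t (s l) = t l := by
  have h' : ∃ l', s l' = s l := ⟨l, rfl⟩
  simp only [merge, dif_neg (hns l), dif_pos h']
  exact congrArg t (hs h'.choose_spec)

lemma merge_measurable {Y K L : ℕ} (p : Fin K → Fin Y) (s : Fin L → Fin Y)
    (ν : Fin K → ℝ) (i : Fin Y) :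
    Measurable (fun t : Fin L → ℝ => merge p s ν t i) := by
  unfold merge
  by_cases h : ∃ k, p k = i
  · simp only [dif_pos h]; exact measurable_const
  · simp only [dif_neg h]
    by_cases h' : ∃ l, s l = i
    · simp only [dif_pos h']; exact measurable_pi_apply _
    · simp only [dif_neg h']; exact measurable_const

lemma image_union_image_eq_univ {Y K L : ℕ} {p : Fin K → Fin Y} {s : Fin L → Fin Y}
    (hps : ∀ i, (∃ k, p k = i) ↔ ¬ ∃ l, s l = i) :
    (Finset.univ.image p) ∪ (Finset.univ.image s) = Finset.univ := by
  ext i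
  simp only [Finset.mem_union, Finset.mem_image, Finset.mem_univ, true_and, iff_true]
  by_cases h : ∃ k, p k = i
  · exact Or.inl h
  · refine Or.inr ?_
    by_contra h2
    exact h ((hps i).mpr h2)

lemma image_disjoint_image {Y K L : ℕ} {p : Fin K → Fin Y} {s : Fin L → Fin Y}
    (hps : ∀ i, (∃ k, p k = i) ↔ ¬ ∃ l, s l = i) :
    Disjoint (Finset.univ.image p) (Finset.univ.image s) := by
  rw [Finset.disjoint_left]
  intro i hip his
  simp only [Finset.mem_image, Finset.mem_univ, true_and] at hip his
  exact ((hps i).mp hip) his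

lemma prod_split {Y K L : ℕ} {p : Fin K → Fin Y} {s : Fin L → Fin Y}
    (hp : Function.Injective p) (hs : Function.Injective s)
    (hps : ∀ i, (∃ k, p k = i) ↔ ¬ ∃ l, s l = i)
    (f : Fin Y → ℝ) :
    ∏ i, f i = (∏ k, f (p k)) * ∏ l, f (s l) := by
  rw [← image_union_image_eq_univ hps, Finset.prod_union (image_disjoint_image hps),
    Finset.prod_image (fun a _ b _ h => hp h), Finset.prod_image (fun a _ b _ h => hs h)]

lemma sum_split {Y K L : ℕ} {p : Fin K → Fin Y} {s : Fin L → Fin Y}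
    (hp : Function.Injective p) (hs : Function.Injective s)
    (hps : ∀ i, (∃ k, p k = i) ↔ ¬ ∃ l, s l = i)
    (f : Fin Y → ℝ) :
    ∑ i, f i = (∑ k, f (p k)) + ∑ l, f (s l) := by
  rw [← image_union_image_eq_univ hps, Finset.sum_union (image_disjoint_image hps),
    Finset.sum_image (fun a _ b _ h => hp h), Finset.sum_image (fun a _ b _ h => hs h)]

lemma psi_le {N M : ℕ} {μ : Fin (min N M) → ℝ} (hanti : StrictAnti μ) (hpos : ∀ i, 0 < μ i) :
    psi N M μ ≤ ∏ i, μ i ^ (max N M - min N M + 2 * (Finset.Ioi i).card) := by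
  unfold psi
  have h1 : ∏ i, ∏ j ∈ Finset.Ioi i, (μ i - μ j) ^ 2 ≤ ∏ i, (μ i ^ 2) ^ (Finset.Ioi i).card := by
    apply Finset.prod_le_prod
    · intro i _; exact Finset.prod_nonneg fun j _ => sq_nonneg _
    · intro i _
      rw [← Finset.prod_const]
      apply Finset.prod_le_prod (fun j _ => sq_nonneg _)
      intro j hj
      rw [Finset.mem_Ioi] at hj
      have h2 := hanti hj
      have h3 := hpos j
      nlinarith
  calc (∏ i, μ i ^ (max N M - min N M)) * ∏ i, ∏ j ∈ Finset.Ioi i, (μ i - μ j) ^ 2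
      ≤ (∏ i, μ i ^ (max N M - min N M)) * ∏ i, (μ i ^ 2) ^ (Finset.Ioi i).card := by
        apply mul_le_mul_of_nonneg_left h1
        exact Finset.prod_nonneg fun i _ => pow_nonneg (hpos i).le _
    _ = ∏ i, μ i ^ (max N M - min N M + 2 * (Finset.Ioi i).card) := by
        rw [← Finset.prod_mul_distrib]
        refine Finset.prod_congr rfl fun i _ => ?_
        rw [← pow_mul, ← pow_add]

lemma integrableOn_pow_mul_exp (c : ℕ) :
    IntegrableOn (fun x : ℝ => x ^ c * Real.exp (-x)) (Set.Ioi 0) := by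
  have h := Real.GammaIntegral_convergent (s := (c : ℝ) + 1) (by positivity)
  refine h.congr_fun (fun x hx => ?_) measurableSet_Ioi
  rw [add_sub_cancel_right]; beta_reduce; rw [Real.rpow_natCast, mul_comm]

lemma integral_pow_mul_exp_Ioi (c : ℕ) :
    ∫ x in Set.Ioi (0:ℝ), x ^ c * Real.exp (-x) = Real.Gamma ((c : ℝ) + 1) := by
  rw [Real.Gamma_eq_integral (by positivity)]
  refine setIntegral_congr_fun measurableSet_Ioi (fun x hx => ?_)
  rw [add_sub_cancel_right, Real.rpow_natCast, mul_comm]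

lemma integral_pow_mul_exp_Ioo_le {a : ℝ} (ha : 0 < a) (c : ℕ) :
    ∫ x in Set.Ioo (0:ℝ) a, x ^ c * Real.exp (-x) ≤ a ^ (c + 1) := by
  have hint1 : IntegrableOn (fun x : ℝ => x ^ c * Real.exp (-x)) (Set.Ioo 0 a) :=
    (integrableOn_pow_mul_exp c).mono_set Set.Ioo_subset_Ioi_self
  have hint2 : IntegrableOn (fun x : ℝ => x ^ c) (Set.Ioo 0 a) := by
    have h := (continuous_pow c : Continuous fun x : ℝ => x ^ c).intervalIntegrable (μ := volume) 0 a
    rw [intervalIntegrable_iff_integrableOn_Ioo_of_le ha.le] at h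
    exact h
  calc ∫ x in Set.Ioo (0:ℝ) a, x ^ c * Real.exp (-x) ≤ ∫ x in Set.Ioo (0:ℝ) a, x ^ c := by
        refine setIntegral_mono_on hint1 hint2 measurableSet_Ioo (fun x hx => ?_)
        have hx0 : 0 ≤ x := hx.1.le
        have : Real.exp (-x) ≤ 1 := Real.exp_le_one_iff.mpr (by linarith)
        nlinarith [pow_nonneg hx0 c]
    _ = a ^ (c + 1) / (c + 1) := by
        rw [← MeasureTheory.integral_Ioc_eq_integral_Ioo,
          ← intervalIntegral.integral_of_le ha.le, integral_pow]
        simp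
    _ ≤ a ^ (c + 1) := by
        apply div_le_self (by positivity)
        linarith [Nat.cast_nonneg (α := ℝ) c]

-- Ici P0 = image p ∪ image s over {l | P0 < s l}
lemma Ici_eq {Y K L : ℕ} {p : Fin K → Fin Y} {s : Fin L → Fin Y} (hK : 0 < K)
    (hp : StrictMono p)
    (hps : ∀ i, (∃ k, p k = i) ↔ ¬ ∃ l, s l = i) :
    Finset.Ici (p ⟨0, hK⟩) =
      (Finset.univ.image p) ∪ ((Finset.univ.filter (fun l => p ⟨0, hK⟩ < s l)).image s) := by
  ext i
  simp only [Finset.mem_Ici, Finset.mem_union, Finset.mem_image, Finset.mem_univ, true_and,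
    Finset.mem_filter]
  constructor
  · intro hi
    by_cases h : ∃ k, p k = i
    · exact Or.inl h
    · have hsl : ∃ l, s l = i := by
        by_contra h2
        exact h ((hps i).mpr h2)
      obtain ⟨l, hl⟩ := hsl
      refine Or.inr ⟨l, ?_, hl⟩
      rcases lt_or_eq_of_le (hl ▸ hi) with h3 | h3
      · exact h3
      · exact absurd ⟨l, rfl⟩ ((hps (s l)).mp ⟨⟨0, hK⟩, h3⟩)
  · rintro (⟨k, rfl⟩ | ⟨l, hl, rfl⟩)
    · exact hp.monotone (by simp [Fin.le_def])
    · exact hl.le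

lemma sum_Ici_fin {Y : ℕ} (P : Fin Y) (g : ℕ → ℕ) :
    ∑ i ∈ Finset.Ici P, g i.val = ∑ n ∈ Finset.Ico (P : ℕ) Y, g n := by
  have hY : 0 < Y := P.pos
  have h := Finset.sum_map (Finset.Ici P) Fin.valEmbedding g
  rw [Fin.map_valEmbedding_Ici] at h
  simp only [Fin.valEmbedding_apply] at h
  rw [← h]

lemma sum_Ici_val {Y X : ℕ} (hXY : Y ≤ X) (P : Fin Y) :
    ∑ i ∈ Finset.Ici P, (X - Y + 2 * (Finset.Ioi i).card + 1)
      = (Y - (P : ℕ)) * (X - (P : ℕ)) := by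
  have hP : (P : ℕ) < Y := P.isLt
  have h1 : ∀ i ∈ Finset.Ici P, X - Y + 2 * (Finset.Ioi i).card + 1
      = (fun n => X - Y + 2 * (Y - 1 - n) + 1) i.val := by
    intro i _; simp [Fin.card_Ioi]
  rw [Finset.sum_congr rfl h1, sum_Ici_fin P (fun n => X - Y + 2 * (Y - 1 - n) + 1),
    Finset.sum_Ico_eq_sum_range]
  have h2 : ∀ j ∈ Finset.range (Y - (P : ℕ)), X - Y + 2 * (Y - 1 - ((P : ℕ) + j)) + 1
      = (fun j => X - Y + 1 + 2 * ((Y - (P : ℕ)) - 1 - j)) j := by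
    intro j _; simp only; omega
  rw [Finset.sum_congr rfl h2]
  rw [Finset.sum_add_distrib, Finset.sum_const, Finset.card_range, smul_eq_mul, ← Finset.mul_sum]
  have h3 : ∑ j ∈ Finset.range (Y - (P : ℕ)), ((Y - (P : ℕ)) - 1 - j)
      = ∑ j ∈ Finset.range (Y - (P : ℕ)), j := Finset.sum_range_reflect id (Y - (P : ℕ))
  rw [h3]
  have h4 : 2 * ∑ j ∈ Finset.range (Y - (P : ℕ)), j = (Y - (P : ℕ)) * ((Y - (P : ℕ)) - 1) := by
    rw [mul_comm, Finset.sum_range_id_mul_two]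
  rw [h4, ← Nat.mul_add]
  congr 1
  omega

lemma degree_count {N M K : ℕ} (hK : 0 < K) (hKY : K ≤ min N M)
    {p : Fin K → Fin (min N M)} (hp : StrictMono p)
    {s : Fin (min N M - K) → Fin (min N M)} (hs : StrictMono s)
    (hps : ∀ i, (∃ k, p k = i) ↔ ¬ ∃ l, s l = i) :
    (N - (p ⟨0, hK⟩ : ℕ)) * (M - (p ⟨0, hK⟩ : ℕ)) - K ≤
      (∑ k, (max N M - min N M + 2 * (Finset.Ioi (p k)).card))
      + ∑ l ∈ Finset.univ.filter (fun l => p ⟨0, hK⟩ < s l),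
          (max N M - min N M + 2 * (Finset.Ioi (s l)).card + 1) := by
  have hdisj : Disjoint (Finset.univ.image p)
      ((Finset.univ.filter (fun l => p ⟨0, hK⟩ < s l)).image s) :=
    Disjoint.mono_right (Finset.image_subset_image (Finset.filter_subset _ _))
      (image_disjoint_image hps)
  have hsum : ∑ i ∈ Finset.Ici (p ⟨0, hK⟩),
        (max N M - min N M + 2 * (Finset.Ioi i).card + 1)
      = (∑ k, (max N M - min N M + 2 * (Finset.Ioi (p k)).card + 1))
        + ∑ l ∈ Finset.univ.filter (fun l => p ⟨0, hK⟩ < s l),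
            (max N M - min N M + 2 * (Finset.Ioi (s l)).card + 1) := by
    rw [Ici_eq hK hp hps, Finset.sum_union hdisj,
      Finset.sum_image (fun a _ b _ h => hp.injective h),
      Finset.sum_image (fun a _ b _ h => hs.injective h)]
  have hval := sum_Ici_val (min_le_max (a := N) (b := M)) (p ⟨0, hK⟩)
  have hprod : ∀ a : ℕ, (min N M - a) * (max N M - a) = (N - a) * (M - a) := by
    intro a
    rcases le_total N M with h | h
    · rw [min_eq_left h, max_eq_right h, mul_comm]
    · rw [min_eq_right h, max_eq_left h, mul_comm]
  have hprod' := hprod ((p ⟨0, hK⟩ : Fin (min N M)) : ℕ)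
  have hKsum : (∑ k : Fin K, (max N M - min N M + 2 * (Finset.Ioi (p k)).card + 1))
      = (∑ k : Fin K, (max N M - min N M + 2 * (Finset.Ioi (p k)).card)) + K := by
    rw [Finset.sum_add_distrib, Finset.sum_const, Finset.card_univ, Fintype.card_fin,
      smul_eq_mul, mul_one]
  omega



set_option maxHeartbeats 2000000 in
/-- the marginal pdf of the `K` ordered eigenvalues selected by `p`
(obtained by integrating `ψ(μ) e^{−Σ_j μ_j}` over the complementary variables selected by
`s`, on the region where the full vector is strictly decreasing and positive) is bounded
above by `r(ν) e^{−Σ_k ν_k}` for some polynomial `r` all of whose monomials have total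
degree at least `(N − p₁ + 1)(M − p₁ + 1) − K` (with `p₁` the 1-based first index, so
written `(N − p 0)(M − p 0) − K` with 0-based `p 0`). -/
theorem marginal_pdf_upper_bound (N M : ℕ) (hN : 0 < N) (hM : 0 < M)
    (K : ℕ) (hK : 0 < K) (hKY : K ≤ min N M)
    (p : Fin K → Fin (min N M)) (hp : StrictMono p)
    (s : Fin (min N M - K) → Fin (min N M)) (hs : StrictMono s)
    (hps : ∀ i : Fin (min N M), (∃ k, p k = i) ↔ ¬ ∃ l, s l = i) :
    ∃ r : MvPolynomial (Fin K) ℝ,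
      (∀ d ∈ r.support,
        (N - (p ⟨0, hK⟩ : ℕ)) * (M - (p ⟨0, hK⟩ : ℕ)) - K ≤ d.sum fun _ e => e) ∧
      ∀ ν : Fin K → ℝ, StrictAnti ν → (∀ k, 0 < ν k) →
        (∫ t in {t : Fin (min N M - K) → ℝ |
            StrictAnti (merge p s ν t) ∧ ∀ i, 0 < merge p s ν t i},
            psi N M (merge p s ν t) * Real.exp (-∑ j, merge p s ν t j)) ≤
          MvPolynomial.eval ν r * Real.exp (-∑ k, ν k) := by
  classical
  have hpinj := hp.injective
  have hsinj := hs.injective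
  have hns : ∀ l, ¬ ∃ k, p k = s l := fun l h => ((hps (s l)).mp h) ⟨l, rfl⟩
  set b : Fin (min N M) → ℕ := fun i => max N M - min N M + 2 * (Finset.Ioi i).card with hb
  set E : ℕ := ∑ l ∈ Finset.univ.filter (fun l => p ⟨0, hK⟩ < s l), (b (s l) + 1) with hE
  set Cu : ℝ := ∏ l ∈ Finset.univ.filter (fun l => ¬ p ⟨0, hK⟩ < s l),
    Real.Gamma ((b (s l) : ℝ) + 1) with hCu
  have hCu0 : 0 < Cu := Finset.prod_pos fun l _ => Real.Gamma_pos_of_pos (by positivity)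
  set d : Fin K →₀ ℕ := Finsupp.equivFunOnFinite.symm
    (fun k => b (p k) + if k = ⟨0, hK⟩ then E else 0) with hd
  have hdapp : ∀ k, d k = b (p k) + if k = ⟨0, hK⟩ then E else 0 := fun k => rfl
  refine ⟨MvPolynomial.monomial d Cu, ?_, ?_⟩
  · intro d' hd'
    rw [MvPolynomial.support_monomial] at hd'
    have hd'' : d' = d := by
      by_cases h : Cu = 0
      · rw [if_pos h] at hd'; exact absurd hd' (Finset.notMem_empty d')
      · rw [if_neg h] at hd'; exact Finset.mem_singleton.mp hd'
    subst hd''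
    have hsum : (d.sum fun (_ : Fin K) (e : ℕ) => e) = ∑ k, (b (p k) + if k = ⟨0, hK⟩ then E else 0) := by
      rw [Finsupp.sum_fintype _ _ (fun _ => rfl)]
      exact Finset.sum_congr rfl fun k _ => hdapp k
    rw [hsum, Finset.sum_add_distrib,
      Finset.sum_ite_eq' Finset.univ (⟨0, hK⟩ : Fin K) (fun _ => E)]
    simp only [Finset.mem_univ, if_true]
    rw [hE]
    exact degree_count hK hKY hp hs hps
  · intro ν hνa hνp
    have hν00 : 0 < ν ⟨0, hK⟩ := hνp _
    set A : Fin (min N M - K) → Set ℝ :=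
      fun l => if p ⟨0, hK⟩ < s l then Set.Ioo 0 (ν ⟨0, hK⟩) else Set.Ioi 0 with hA
    set gl : Fin (min N M - K) → ℝ → ℝ :=
      fun l => (A l).indicator (fun x => x ^ b (s l) * Real.exp (-x)) with hgl
    have hA0 : ∀ l, A l ⊆ Set.Ioi 0 := by
      intro l; simp only [hA]; split
      · exact Set.Ioo_subset_Ioi_self
      · exact subset_rfl
    have hAm : ∀ l, MeasurableSet (A l) := by
      intro l; simp only [hA]; split
      · exact measurableSet_Ioo
      · exact measurableSet_Ioi
    have hglnn : ∀ l x, 0 ≤ gl l x := by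
      intro l x
      apply Set.indicator_nonneg
      intro y hy
      have hy0 : (0:ℝ) < y := hA0 l hy
      positivity
    have hglint : ∀ l, Integrable (gl l) := by
      intro l
      simp only [hgl]
      rw [MeasureTheory.integrable_indicator_iff (hAm l)]
      exact (integrableOn_pow_mul_exp _).mono_set (hA0 l)
    set I : Fin (min N M - K) → ℝ :=
      fun l => if p ⟨0, hK⟩ < s l then (ν ⟨0, hK⟩) ^ (b (s l) + 1)
        else Real.Gamma ((b (s l) : ℝ) + 1) with hI
    have hInn : ∀ l, 0 ≤ I l := by
      intro l; simp only [hI]; split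
      · exact pow_nonneg hν00.le _
      · rename_i h
        refine (Real.Gamma_pos_of_pos ?_).le
        have h2 := Nat.cast_nonneg (α := ℝ) (b (s l))
        linarith
    have hglI : ∀ l, ∫ x, gl l x ≤ I l := by
      intro l
      simp only [hgl, hI]
      rw [MeasureTheory.integral_indicator (hAm l)]
      by_cases h : p ⟨0, hK⟩ < s l
      · simp only [hA, if_pos h]
        exact integral_pow_mul_exp_Ioo_le hν00 _
      · simp only [hA, if_neg h]
        exact le_of_eq (integral_pow_mul_exp_Ioi _)
    set S := {t : Fin (min N M - K) → ℝ |
        StrictAnti (merge p s ν t) ∧ ∀ i, 0 < merge p s ν t i} with hS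
    have hSm : MeasurableSet S := by
      have h1 : S = {t : Fin (min N M - K) → ℝ |
            ∀ i j : Fin (min N M), i < j → merge p s ν t j < merge p s ν t i}
          ∩ {t | ∀ i, 0 < merge p s ν t i} := by
        ext t
        simp only [hS, Set.mem_setOf_eq, Set.mem_inter_iff]
        exact and_congr_left' ⟨fun h i j hij => h hij, fun h i j hij => h i j hij⟩
      rw [h1]
      apply MeasurableSet.inter
      · rw [Set.setOf_forall]
        apply MeasurableSet.iInter; intro i
        rw [Set.setOf_forall]
        apply MeasurableSet.iInter; intro j
        by_cases hij : i < j
        · simp only [hij, true_implies]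
          exact measurableSet_lt (merge_measurable p s ν j) (merge_measurable p s ν i)
        · simp only [hij, false_implies, Set.setOf_true]
          exact MeasurableSet.univ
      · rw [Set.setOf_forall]
        apply MeasurableSet.iInter; intro i
        exact measurableSet_lt measurable_const (merge_measurable p s ν i)
    have hmp : ∀ (t : Fin (min N M - K) → ℝ) k, merge p s ν t (p k) = ν k :=
      fun t k => merge_apply_p hpinj ν t k
    have hms : ∀ (t : Fin (min N M - K) → ℝ) l, merge p s ν t (s l) = t l :=
      fun t l => merge_apply_s hsinj hns ν t l
    have key : ∀ t ∈ S, psi N M (merge p s ν t) * Real.exp (-∑ j, merge p s ν t j)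
        ≤ ((∏ k, ν k ^ b (p k)) * Real.exp (-∑ k, ν k)) * ∏ l, gl l (t l) := by
      intro t ht
      obtain ⟨hanti, hpos⟩ := ht
      have htpos : ∀ l, 0 < t l := fun l => (hms t l) ▸ hpos (s l)
      have htA : ∀ l, t l ∈ A l := by
        intro l
        simp only [hA]
        split
        · rename_i h
          refine ⟨htpos l, ?_⟩
          have h2 := hanti h
          rwa [hms t l, hmp t ⟨0, hK⟩] at h2
        · exact htpos l
      have hprodgl : ∏ l, gl l (t l) = ∏ l, (t l ^ b (s l) * Real.exp (-(t l))) := by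
        refine Finset.prod_congr rfl fun l _ => ?_
        simp only [hgl]
        rw [Set.indicator_of_mem (htA l)]
      have hpsi := psi_le hanti hpos
      have hsplit : ∏ i, merge p s ν t i ^ b i
          = (∏ k, ν k ^ b (p k)) * ∏ l, t l ^ b (s l) := by
        rw [prod_split hpinj hsinj hps]
        congr 1
        · exact Finset.prod_congr rfl fun k _ => by rw [hmp t k]
        · exact Finset.prod_congr rfl fun l _ => by rw [hms t l]
      have hsum2 : ∑ j, merge p s ν t j = (∑ k, ν k) + ∑ l, t l := by
        rw [sum_split hpinj hsinj hps]
        congr 1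
        · exact Finset.sum_congr rfl fun k _ => hmp t k
        · exact Finset.sum_congr rfl fun l _ => hms t l
      have hexp : Real.exp (-∑ l, t l) = ∏ l, Real.exp (-(t l)) := by
        rw [← Real.exp_sum, ← Finset.sum_neg_distrib]
      rw [hprodgl, hsum2, neg_add, Real.exp_add]
      calc psi N M (merge p s ν t) * (Real.exp (-∑ k, ν k) * Real.exp (-∑ l, t l))
          ≤ ((∏ k, ν k ^ b (p k)) * ∏ l, t l ^ b (s l))
            * (Real.exp (-∑ k, ν k) * Real.exp (-∑ l, t l)) := by
            apply mul_le_mul_of_nonneg_right (hsplit ▸ hpsi) (by positivity)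
        _ = ((∏ k, ν k ^ b (p k)) * Real.exp (-∑ k, ν k))
            * ((∏ l, t l ^ b (s l)) * ∏ l, Real.exp (-(t l))) := by
            rw [hexp]; ring
        _ = _ := by rw [← Finset.prod_mul_distrib]
    have hCν : (0:ℝ) ≤ (∏ k, ν k ^ b (p k)) * Real.exp (-∑ k, ν k) :=
      mul_nonneg (Finset.prod_nonneg fun k _ => pow_nonneg (hνp k).le _) (Real.exp_nonneg _)
    have hfinal : ((∏ k, ν k ^ b (p k)) * Real.exp (-∑ k, ν k)) * ∏ l, I l
        = MvPolynomial.eval ν (MvPolynomial.monomial d Cu) * Real.exp (-∑ k, ν k) := by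
      rw [MvPolynomial.eval_monomial, Finsupp.prod_fintype _ _ (fun k => pow_zero (ν k))]
      have hIprod : ∏ l, I l = (ν ⟨0, hK⟩) ^ E * Cu := by
        simp only [hI]
        rw [Finset.prod_ite, hE, hCu, Finset.prod_pow_eq_pow_sum]
      have hνprod : ∏ k, ν k ^ d k = (∏ k, ν k ^ b (p k)) * (ν ⟨0, hK⟩) ^ E := by
        have h1 : ∀ k : Fin K, ν k ^ d k
            = ν k ^ b (p k) * (if k = ⟨0, hK⟩ then ν k ^ E else 1) := by
          intro k
          rw [hdapp k, pow_add]
          congr 1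
          split <;> simp
        rw [Finset.prod_congr rfl fun k _ => h1 k, Finset.prod_mul_distrib,
          Finset.prod_ite_eq' Finset.univ (⟨0, hK⟩ : Fin K) (fun k => ν k ^ E)]
        simp only [Finset.mem_univ, if_true]
      rw [hIprod, hνprod]
      ring
    by_cases hfi : IntegrableOn
        (fun t => psi N M (merge p s ν t) * Real.exp (-∑ j, merge p s ν t j)) S volume
    · have hgint : Integrable (fun t : Fin (min N M - K) → ℝ =>
          ((∏ k, ν k ^ b (p k)) * Real.exp (-∑ k, ν k)) * ∏ l, gl l (t l)) :=
        (MeasureTheory.Integrable.fintype_prod hglint).const_mul _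
      calc (∫ t in S, psi N M (merge p s ν t) * Real.exp (-∑ j, merge p s ν t j))
          ≤ ∫ t in S, ((∏ k, ν k ^ b (p k)) * Real.exp (-∑ k, ν k)) * ∏ l, gl l (t l) :=
            setIntegral_mono_on hfi hgint.integrableOn hSm key
        _ ≤ ∫ t : Fin (min N M - K) → ℝ, ((∏ k, ν k ^ b (p k)) * Real.exp (-∑ k, ν k)) * ∏ l, gl l (t l) :=
            setIntegral_le_integral hgint (Filter.Eventually.of_forall fun (t : Fin (min N M - K) → ℝ) =>
              mul_nonneg hCν (Finset.prod_nonneg fun l _ => hglnn l (t l)))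
        _ = ((∏ k, ν k ^ b (p k)) * Real.exp (-∑ k, ν k)) * ∏ l, ∫ x, gl l x := by
            rw [MeasureTheory.integral_const_mul,
              MeasureTheory.integral_fintype_prod_volume_eq_prod gl]
        _ ≤ ((∏ k, ν k ^ b (p k)) * Real.exp (-∑ k, ν k)) * ∏ l, I l := by
            apply mul_le_mul_of_nonneg_left _ hCν
            exact Finset.prod_le_prod (fun l _ => integral_nonneg (hglnn l)) (fun l _ => hglI l)
        _ = _ := hfinal
    · rw [MeasureTheory.integral_undef hfi]
      rw [MvPolynomial.eval_monomial, Finsupp.prod_fintype _ _ (fun k => pow_zero (ν k))]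
      have h1 : (0:ℝ) ≤ ∏ k, ν k ^ d k :=
        Finset.prod_nonneg fun k _ => pow_nonneg (hνp k).le _
      have h2 := Real.exp_nonneg (-∑ k, ν k)
      exact mul_nonneg (mul_nonneg hCu0.le h1) h2
end

section
/- Let N and M be positive integers, X = max(N, M), Y = min(N, M), and let l be an index with 1 ≤ l ≤ Y. Define the marginal f(μ_l), for μ_l > 0, as the Lebesgue integral of ψ(μ_1, …, μ_Y) · exp(−Σ_{j=1}^Y μ_j) over the variables μ_j for j ≠ l, ranging over all values for which μ_1 > μ_2 > ⋯ > μ_Y > 0. Then there exists a single-variable polynomial r each of whose monomials with non-zero coefficient has degree at least (N − l + 1)(M − l + 1) − 1, such that f(μ_l) ≤ r(μ_l) e^{−μ_l} for all μ_l > 0. -/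
open MeasureTheory Real Finset

/-- Assemble a full vector placing the value `x` at the (0-based) position `l − 1` and the
values `t` at the complementary positions enumerated by `s`. -/
noncomputable def merge1 {Y L : ℕ} (l : ℕ) (s : Fin L → Fin Y) (x : ℝ) (t : Fin L → ℝ) :
    Fin Y → ℝ := fun i =>
  if (i : ℕ) = l - 1 then x
  else if h : ∃ k, s k = i then t h.choose
  else 0

private lemma aux_image {Y L l : ℕ} (s : Fin L → Fin Y) (hs : Function.Injective s)
    (hY : l - 1 < Y) (hsl : ∀ i : Fin Y, (i : ℕ) = l - 1 ↔ ¬ ∃ k, s k = i) :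
    Finset.image s Finset.univ = Finset.univ.erase ⟨l - 1, hY⟩ := by
  ext i
  simp only [Finset.mem_image, Finset.mem_univ, true_and, Finset.mem_erase, and_true]
  constructor
  · rintro ⟨k, rfl⟩ h
    exact (hsl (s k)).mp (by rw [h]) ⟨k, rfl⟩
  · intro h
    by_contra hc
    push_neg at hc
    exact h (Fin.ext ((hsl i).mpr (by rintro ⟨k, hk⟩; exact hc k hk)))

private lemma aux_prod_split {β : Type*} [CommMonoid β] {Y L l : ℕ} (s : Fin L → Fin Y)
    (hs : Function.Injective s) (hY : l - 1 < Y)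
    (hsl : ∀ i : Fin Y, (i : ℕ) = l - 1 ↔ ¬ ∃ k, s k = i) (g : Fin Y → β) :
    ∏ i, g i = g ⟨l - 1, hY⟩ * ∏ k, g (s k) := by
  have h1 : ∏ k, g (s k) = ∏ i ∈ Finset.image s Finset.univ, g i :=
    (Finset.prod_image (fun a _ b _ hab => hs hab)).symm
  rw [h1, aux_image s hs hY hsl]
  exact (Finset.mul_prod_erase _ _ (Finset.mem_univ _)).symm

private lemma aux_deg (Xv Yv l : ℕ) (h1 : 1 ≤ l) (h2 : l ≤ Yv) (h3 : Yv ≤ Xv) :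
    (Xv - l + 1) * (Yv - l + 1) - 1 ≤
      (Xv - Yv + 2 * (Yv - 1 - (l - 1))) +
        ∑ i ∈ Finset.range Yv, (if l ≤ i then (Xv - Yv + 2 * (Yv - 1 - i)) + 1 else 0) := by
  obtain ⟨v, rfl⟩ : ∃ v, Yv = l + v := ⟨Yv - l, by omega⟩
  obtain ⟨w, rfl⟩ : ∃ w, Xv = l + v + w := ⟨Xv - (l + v), by omega⟩
  have hsum : ∑ i ∈ Finset.range (l + v),
      (if l ≤ i then (l + v + w - (l + v) + 2 * (l + v - 1 - i)) + 1 else 0)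
      = ∑ j ∈ Finset.range v, (w + 2 * (v - 1 - j) + 1) := by
    rw [Finset.sum_range_add]
    rw [Finset.sum_eq_zero (fun i hi => by
      rw [if_neg]; exact fun hli => absurd (Finset.mem_range.mp hi) (by omega)), zero_add]
    refine Finset.sum_congr rfl (fun j hj => ?_)
    have hj' : j < v := Finset.mem_range.mp hj
    rw [if_pos (by omega)]
    congr 1
    omega
  rw [hsum]
  have hrefl : ∑ j ∈ Finset.range v, (w + 2 * (v - 1 - j) + 1)
      = ∑ j ∈ Finset.range v, (w + 2 * j + 1) :=
    Finset.sum_range_reflect (fun j => w + 2 * j + 1) v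
  rw [hrefl]
  have hval : ∑ j ∈ Finset.range v, (w + 2 * j + 1) = v * (w + 1) + v * (v - 1) := by
    have h4 : ∀ j, w + 2 * j + 1 = (w + 1) + 2 * j := fun j => by omega
    simp_rw [h4]
    rw [Finset.sum_add_distrib, Finset.sum_const, Finset.card_range, ← Finset.mul_sum,
      smul_eq_mul]
    have := Finset.sum_range_id_mul_two v
    omega
  rw [hval]
  rcases v with _ | vv
  · have e1 : l + 0 + w - l + 1 = w + 1 := by omega
    have e2 : l + 0 - l + 1 = 1 := by omega
    rw [e1, e2]
    omega
  · have e1 : l + (vv + 1) + w - l + 1 = vv + w + 2 := by omega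
    have e2 : l + (vv + 1) - l + 1 = vv + 2 := by omega
    have e3 : l + (vv + 1) + w - (l + (vv + 1)) = w := by omega
    have e4 : l + (vv + 1) - 1 - (l - 1) = vv + 1 := by omega
    rw [e1, e2, e3, e4]
    have expand : (vv + w + 2) * (vv + 2)
        = w + 2 * (vv + 1) + ((vv + 1) * (w + 1) + (vv + 1) * (vv + 1 - 1)) + 1 := by
      simp only [Nat.add_sub_cancel]
      ring
    omega

/-- the marginal pdf of the single `l`-th ordered eigenvalue (obtained by
integrating `ψ(μ) e^{−Σ_j μ_j}` over the other `Y − 1` variables, on the region where the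
full vector is strictly decreasing and positive) is bounded above by `r(x) e^{−x}` for
some polynomial `r` all of whose monomials have degree at least
`(N − l + 1)(M − l + 1) − 1`. -/
theorem single_marginal_pdf_upper_bound (N M : ℕ) (hN : 0 < N) (hM : 0 < M)
    (l : ℕ) (hl1 : 1 ≤ l) (hlY : l ≤ min N M)
    (s : Fin (min N M - 1) → Fin (min N M)) (hs : StrictMono s)
    (hsl : ∀ i : Fin (min N M), (i : ℕ) = l - 1 ↔ ¬ ∃ k, s k = i) :
    ∃ r : Polynomial ℝ,
      (∀ d ∈ r.support, (N - l + 1) * (M - l + 1) - 1 ≤ d) ∧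
      ∀ x : ℝ, 0 < x →
        (∫ t in {t : Fin (min N M - 1) → ℝ |
            StrictAnti (merge1 l s x t) ∧ ∀ i, 0 < merge1 l s x t i},
            psi N M (merge1 l s x t) * Real.exp (-∑ j, merge1 l s x t j)) ≤
          Polynomial.eval x r * Real.exp (-x) := by
  classical
  have hY1 : 1 ≤ min N M := le_trans hl1 hlY
  have hpY : l - 1 < min N M := by omega
  set p : Fin (min N M) := ⟨l - 1, hpY⟩ with hp
  set a : ℕ → ℕ := fun i => (max N M - min N M) + 2 * (min N M - 1 - i) with ha
  set K : Finset (Fin (min N M - 1)) := Finset.univ.filter (fun k => l ≤ (s k : ℕ)) with hK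
  set Kc : Finset (Fin (min N M - 1)) :=
    Finset.univ.filter (fun k => ¬ l ≤ (s k : ℕ)) with hKc
  set D : ℕ := a (l - 1) + (∑ k ∈ K, a (s k : ℕ)) + K.card with hD
  set J : ℝ := ∏ k ∈ Kc, (∫ u in Set.Ioi (0:ℝ), u ^ (a (s k : ℕ)) * Real.exp (-u)) with hJ
  refine ⟨Polynomial.C J * Polynomial.X ^ D, ?_, ?_⟩
  · -- degree bound
    intro d hd
    have hdD : d = D := by
      have := Polynomial.support_C_mul_X_pow' D J hd
      simpa using this
    subst hdD
    have hNM : (N - l + 1) * (M - l + 1) = (max N M - l + 1) * (min N M - l + 1) := by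
      rcases le_total N M with h | h
      · rw [max_eq_right h, min_eq_left h, Nat.mul_comm]
      · rw [max_eq_left h, min_eq_right h]
    have hsum_eq : (∑ k ∈ K, a (s k : ℕ)) + K.card
        = ∑ i ∈ Finset.range (min N M), (if l ≤ i then a i + 1 else 0) := by
      have h1 : ∑ k ∈ K, (a (s k : ℕ) + 1) = (∑ k ∈ K, a (s k : ℕ)) + K.card := by
        have := Finset.sum_add_distrib (s := K) (f := fun k => a (s k : ℕ))
          (g := fun _ => (1 : ℕ))
        simpa using this
      have h2 : ∑ k ∈ K, (a (s k : ℕ) + 1)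
          = ∑ k, (if l ≤ (s k : ℕ) then a (s k : ℕ) + 1 else 0) := by
        rw [hK]; exact Finset.sum_filter _ _
      have h3 : ∑ i ∈ Finset.image s Finset.univ,
            (if l ≤ (i : ℕ) then a (i : ℕ) + 1 else 0)
          = ∑ k, (if l ≤ (s k : ℕ) then a (s k : ℕ) + 1 else 0) :=
        Finset.sum_image (fun u _ v _ huv => hs.injective huv)
      have hple : ¬ l ≤ (p : ℕ) := by show ¬ l ≤ l - 1; omega
      have h4 : ∑ i ∈ Finset.univ.erase p, (if l ≤ (i : ℕ) then a (i : ℕ) + 1 else 0)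
          = ∑ i : Fin (min N M), (if l ≤ (i : ℕ) then a (i : ℕ) + 1 else 0) :=
        Finset.sum_erase _ (by rw [if_neg hple])
      have h5 : ∑ i : Fin (min N M), (if l ≤ (i : ℕ) then a (i : ℕ) + 1 else 0)
          = ∑ i ∈ Finset.range (min N M), (if l ≤ i then a i + 1 else 0) :=
        Fin.sum_univ_eq_sum_range (fun i => if l ≤ i then a i + 1 else 0) _
      rw [← h1, h2, ← h3, aux_image s hs.injective hpY hsl, ← hp, h4, h5]
    rw [hD, hNM]
    have hdeg := aux_deg (max N M) (min N M) l hl1 hlY (min_le_max)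
    calc (max N M - l + 1) * (min N M - l + 1) - 1
        ≤ (max N M - min N M + 2 * (min N M - 1 - (l - 1))) +
            ∑ i ∈ Finset.range (min N M),
              (if l ≤ i then (max N M - min N M + 2 * (min N M - 1 - i)) + 1 else 0) := hdeg
      _ = a (l - 1) + ((∑ k ∈ K, a (s k : ℕ)) + K.card) := by rw [hsum_eq]
      _ = a (l - 1) + (∑ k ∈ K, a (s k : ℕ)) + K.card := by omega
  · -- integral bound
    intro x hx
    set S : Set (Fin (min N M - 1) → ℝ) :=
      {t | StrictAnti (merge1 l s x t) ∧ ∀ i, 0 < merge1 l s x t i} with hS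
    set φ : Fin (min N M - 1) → ℝ → ℝ := fun k =>
      if l ≤ (s k : ℕ) then (Set.Ioo (0:ℝ) x).indicator (fun u => Real.exp (-u))
      else (Set.Ioi (0:ℝ)).indicator (fun u => u ^ (a (s k : ℕ)) * Real.exp (-u)) with hφ
    set D0 : ℕ := a (l - 1) + ∑ k ∈ K, a (s k : ℕ) with hD0
    set G : (Fin (min N M - 1) → ℝ) → ℝ :=
      fun t => (x ^ D0 * Real.exp (-x)) * ∏ k, φ k (t k) with hG
    -- basic evaluations of merge1
    have hμp : ∀ t : Fin (min N M - 1) → ℝ, merge1 l s x t p = x := by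
      intro t
      show (if ((p : ℕ) = l - 1) then x else _) = x
      rw [if_pos rfl]
    have hμs : ∀ (t : Fin (min N M - 1) → ℝ) k, merge1 l s x t (s k) = t k := by
      intro t k
      have hne : ¬ ((s k : ℕ) = l - 1) := fun h => (hsl (s k)).mp h ⟨k, rfl⟩
      have hex : ∃ k', s k' = s k := ⟨k, rfl⟩
      show (if ((s k : ℕ) = l - 1) then x
        else if h : ∃ k', s k' = s k then t h.choose else 0) = t k
      rw [if_neg hne, dif_pos hex]
      exact congrArg t (hs.injective hex.choose_spec)
    -- membership facts
    have hmemIoo : ∀ t ∈ S, ∀ k, l ≤ (s k : ℕ) → t k ∈ Set.Ioo (0:ℝ) x := by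
      intro t ht k hk
      obtain ⟨ht1, ht2⟩ := ht
      have hps : p < s k := by
        rw [Fin.lt_def]
        show l - 1 < (s k : ℕ)
        omega
      have h1 := ht1 hps
      rw [hμp t, hμs t k] at h1
      have h2 := ht2 (s k)
      rw [hμs t k] at h2
      exact ⟨h2, h1⟩
    have hmemIoi : ∀ t ∈ S, ∀ k, t k ∈ Set.Ioi (0:ℝ) := by
      intro t ht k
      have h2 := ht.2 (s k)
      rwa [hμs t k] at h2
    -- nonnegativity of φ
    have hφnn : ∀ k u, 0 ≤ φ k u := by
      intro k u
      simp only [hφ]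
      split
      · exact Set.indicator_nonneg (fun u _ => (Real.exp_pos _).le) u
      · exact Set.indicator_nonneg
          (fun u hu => mul_nonneg (pow_nonneg (le_of_lt hu) _) (Real.exp_pos _).le) u
    -- integrability of φ
    have hexpIoo : IntegrableOn (fun u : ℝ => Real.exp (-u)) (Set.Ioo 0 x) := by
      have h := exp_neg_integrableOn_Ioi (0:ℝ) (b := 1) one_pos
      simp only [neg_mul, one_mul] at h
      exact h.mono_set Set.Ioo_subset_Ioi_self
    have hpowIoi : ∀ n : ℕ, IntegrableOn (fun u : ℝ => u ^ n * Real.exp (-u)) (Set.Ioi 0) := by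
      intro n
      have h := Real.GammaIntegral_convergent (s := (n : ℝ) + 1) (by positivity)
      refine h.congr_fun (fun u hu => ?_) measurableSet_Ioi
      simp only [add_sub_cancel_right, Real.rpow_natCast]
      ring
    have hφint : ∀ k, Integrable (φ k) := by
      intro k
      simp only [hφ]
      split
      · exact hexpIoo.integrable_indicator measurableSet_Ioo
      · exact (hpowIoi _).integrable_indicator measurableSet_Ioi
    have hGint : Integrable G := by
      simp only [hG]
      exact (Integrable.fintype_prod (f := φ) hφint).const_mul _
    -- continuity
    have hmergec : Continuous (fun t : Fin (min N M - 1) → ℝ => merge1 l s x t) := by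
      refine continuous_pi (fun i => ?_)
      show Continuous fun t : Fin (min N M - 1) → ℝ =>
        if (i : ℕ) = l - 1 then x else if h : ∃ k, s k = i then t h.choose else 0
      by_cases h1 : (i : ℕ) = l - 1
      · simp only [if_pos h1]; exact continuous_const
      · simp only [if_neg h1]
        by_cases h2 : ∃ k, s k = i
        · simp only [dif_pos h2]; exact continuous_apply _
        · simp only [dif_neg h2]; exact continuous_const
    have hpsic : Continuous (psi N M) := by
      unfold psi
      exact (continuous_finset_prod _ fun i _ => (continuous_apply i).pow _).mul
        (continuous_finset_prod _ fun i _ => continuous_finset_prod _ fun j _ =>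
          ((continuous_apply i).sub (continuous_apply j)).pow _)
    have hFc : Continuous (fun t : Fin (min N M - 1) → ℝ =>
        psi N M (merge1 l s x t) * Real.exp (-∑ j, merge1 l s x t j)) :=
      (hpsic.comp hmergec).mul
        ((continuous_finset_sum _ fun j _ => (continuous_apply j).comp hmergec).neg.rexp)
    -- S is open hence measurable
    have hSopen : IsOpen S := by
      have hSeq : S = (⋂ q : Fin (min N M) × Fin (min N M),
            {t : Fin (min N M - 1) → ℝ |
              q.1 < q.2 → merge1 l s x t q.2 < merge1 l s x t q.1}) ∩
          ⋂ i : Fin (min N M), {t : Fin (min N M - 1) → ℝ | 0 < merge1 l s x t i} := by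
        ext t
        simp only [hS, Set.mem_setOf_eq, Set.mem_inter_iff, Set.mem_iInter, Prod.forall]
        constructor
        · rintro ⟨h1, h2⟩
          exact ⟨fun i j hij => h1 hij, h2⟩
        · rintro ⟨h1, h2⟩
          exact ⟨fun i j hij => h1 i j hij, h2⟩
      rw [hSeq]
      refine IsOpen.inter (isOpen_iInter_of_finite fun q => ?_)
        (isOpen_iInter_of_finite fun i => ?_)
      · by_cases hq : q.1 < q.2
        · have : {t : Fin (min N M - 1) → ℝ |
              q.1 < q.2 → merge1 l s x t q.2 < merge1 l s x t q.1}
              = {t : Fin (min N M - 1) → ℝ | merge1 l s x t q.2 < merge1 l s x t q.1} := by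
            ext t; simp [hq]
          rw [this]
          exact isOpen_lt ((continuous_apply q.2).comp hmergec)
            ((continuous_apply q.1).comp hmergec)
        · have : {t : Fin (min N M - 1) → ℝ |
              q.1 < q.2 → merge1 l s x t q.2 < merge1 l s x t q.1} = Set.univ := by
            ext t; simp [hq]
          rw [this]
          exact isOpen_univ
      · exact isOpen_lt continuous_const ((continuous_apply i).comp hmergec)
    have hSm : MeasurableSet S := hSopen.measurableSet
    -- pointwise bound
    have hFle : ∀ t ∈ S, psi N M (merge1 l s x t) * Real.exp (-∑ j, merge1 l s x t j) ≤ G t := by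
      intro t ht
      obtain ⟨ht1, ht2⟩ := ht
      have hstep1 : psi N M (merge1 l s x t) ≤ ∏ i, merge1 l s x t i ^ a (i : ℕ) := by
        unfold psi
        have hb : ∀ i : Fin (min N M),
            ∏ j ∈ Finset.Ioi i, (merge1 l s x t i - merge1 l s x t j) ^ 2
              ≤ merge1 l s x t i ^ (2 * (min N M - 1 - (i : ℕ))) := by
          intro i
          calc ∏ j ∈ Finset.Ioi i, (merge1 l s x t i - merge1 l s x t j) ^ 2
              ≤ ∏ j ∈ Finset.Ioi i, (merge1 l s x t i) ^ 2 := by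
                refine Finset.prod_le_prod (fun j _ => sq_nonneg _) (fun j hj => ?_)
                have hji : i < j := Finset.mem_Ioi.mp hj
                have h1 : 0 < merge1 l s x t j := ht2 j
                have h2 : merge1 l s x t j < merge1 l s x t i := ht1 hji
                nlinarith
            _ = merge1 l s x t i ^ (2 * (min N M - 1 - (i : ℕ))) := by
                rw [Finset.prod_const, Fin.card_Ioi, ← pow_mul]
        calc (∏ i, merge1 l s x t i ^ (max N M - min N M)) *
              ∏ i, ∏ j ∈ Finset.Ioi i, (merge1 l s x t i - merge1 l s x t j) ^ 2
            ≤ (∏ i, merge1 l s x t i ^ (max N M - min N M)) *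
              ∏ i, merge1 l s x t i ^ (2 * (min N M - 1 - (i : ℕ))) := by
              refine mul_le_mul_of_nonneg_left
                (Finset.prod_le_prod (fun i _ => Finset.prod_nonneg fun j _ => sq_nonneg _)
                  (fun i _ => hb i))
                (Finset.prod_nonneg fun i _ => pow_nonneg (ht2 i).le _)
          _ = ∏ i, merge1 l s x t i ^ a (i : ℕ) := by
              rw [← Finset.prod_mul_distrib]
              exact Finset.prod_congr rfl fun i _ => by rw [← pow_add]
      have hexpprod : Real.exp (-∑ j, merge1 l s x t j)
          = ∏ i, Real.exp (-merge1 l s x t i) := by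
        rw [← Finset.sum_neg_distrib, Real.exp_sum]
      have hsplit := aux_prod_split s hs.injective hpY hsl
        (fun i => merge1 l s x t i ^ a (i : ℕ) * Real.exp (-merge1 l s x t i))
      calc psi N M (merge1 l s x t) * Real.exp (-∑ j, merge1 l s x t j)
          ≤ (∏ i, merge1 l s x t i ^ a (i : ℕ)) * Real.exp (-∑ j, merge1 l s x t j) :=
            mul_le_mul_of_nonneg_right hstep1 (Real.exp_pos _).le
        _ = ∏ i, (merge1 l s x t i ^ a (i : ℕ) * Real.exp (-merge1 l s x t i)) := by
            rw [hexpprod, ← Finset.prod_mul_distrib]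
        _ = (x ^ a (l - 1) * Real.exp (-x)) *
              ∏ k, (t k ^ a ((s k : ℕ)) * Real.exp (-(t k))) := by
            rw [hsplit]
            congr 1
            · rw [show merge1 l s x t ⟨l - 1, hpY⟩ = x from hμp t]
            · exact Finset.prod_congr rfl fun k _ => by rw [hμs t k]
        _ ≤ (x ^ a (l - 1) * Real.exp (-x)) *
              ∏ k, ((if l ≤ (s k : ℕ) then x ^ a ((s k : ℕ)) else 1) * φ k (t k)) := by
            refine mul_le_mul_of_nonneg_left
              (Finset.prod_le_prod (fun k _ => mul_nonneg
                (pow_nonneg (le_of_lt (hmemIoi t ⟨ht1, ht2⟩ k)) _) (Real.exp_pos _).le)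
                (fun k _ => ?_))
              (mul_nonneg (pow_nonneg hx.le _) (Real.exp_pos _).le)
            by_cases hk : l ≤ (s k : ℕ)
            · have htk := hmemIoo t ⟨ht1, ht2⟩ k hk
              rw [if_pos hk]
              simp only [hφ, if_pos hk]
              rw [Set.indicator_of_mem htk]
              exact mul_le_mul_of_nonneg_right
                (pow_le_pow_left₀ (le_of_lt htk.1) htk.2.le _) (Real.exp_pos _).le
            · rw [if_neg hk, one_mul]
              simp only [hφ, if_neg hk]
              rw [Set.indicator_of_mem (hmemIoi t ⟨ht1, ht2⟩ k)]
        _ = G t := by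
            simp only [hG]
            rw [Finset.prod_mul_distrib]
            have hiteq : ∏ k, (if l ≤ (s k : ℕ) then x ^ a ((s k : ℕ)) else 1)
                = x ^ (∑ k ∈ K, a ((s k : ℕ))) := by
              rw [← Finset.prod_pow_eq_pow_sum, hK, Finset.prod_filter]
            rw [hiteq, hD0, pow_add]
            ring
    -- nonnegativity
    have hFnn : ∀ t ∈ S,
        0 ≤ psi N M (merge1 l s x t) * Real.exp (-∑ j, merge1 l s x t j) := by
      intro t ht
      have hψ : 0 ≤ psi N M (merge1 l s x t) := by
        unfold psi
        exact mul_nonneg (Finset.prod_nonneg fun i _ => pow_nonneg (ht.2 i).le _)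
          (Finset.prod_nonneg fun i _ => Finset.prod_nonneg fun j _ => sq_nonneg _)
      exact mul_nonneg hψ (Real.exp_pos _).le
    have hGnn : ∀ t, 0 ≤ G t := fun t =>
      mul_nonneg (mul_nonneg (pow_nonneg hx.le _) (Real.exp_pos _).le)
        (Finset.prod_nonneg fun k _ => hφnn k _)
    -- integrability of the integrand on S
    have hFint : IntegrableOn (fun t => psi N M (merge1 l s x t) *
        Real.exp (-∑ j, merge1 l s x t j)) S := by
      refine (hGint.integrableOn).mono' hFc.aestronglyMeasurable.restrict ?_
      refine (ae_restrict_iff' hSm).mpr (ae_of_all _ fun t ht => ?_)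
      rw [Real.norm_eq_abs, abs_of_nonneg (hFnn t ht)]
      exact hFle t ht
    -- main chain
    have hIoo_vol : (volume (Set.Ioo (0:ℝ) x)) < ⊤ := by
      rw [Real.volume_Ioo]
      exact ENNReal.ofReal_lt_top
    calc (∫ t in S, psi N M (merge1 l s x t) * Real.exp (-∑ j, merge1 l s x t j))
        ≤ ∫ t in S, G t := setIntegral_mono_on hFint hGint.integrableOn hSm hFle
      _ ≤ ∫ t, G t := setIntegral_le_integral hGint (ae_of_all _ hGnn)
      _ = (x ^ D0 * Real.exp (-x)) * ∏ k, (∫ u, φ k u) := by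
          simp only [hG]
          rw [MeasureTheory.integral_const_mul,
            MeasureTheory.integral_fintype_prod_volume_eq_prod (f := φ)]
      _ ≤ (x ^ D0 * Real.exp (-x)) * (x ^ K.card * J) := by
          refine mul_le_mul_of_nonneg_left ?_
            (mul_nonneg (pow_nonneg hx.le _) (Real.exp_pos _).le)
          have hsplitprod : ∏ k, (∫ u, φ k u)
              = (∏ k ∈ K, (∫ u, φ k u)) * (∏ k ∈ Kc, (∫ u, φ k u)) := by
            rw [hK, hKc,
              ← Finset.prod_filter_mul_prod_filter_not Finset.univ (fun k => l ≤ (s k : ℕ))]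
          rw [hsplitprod]
          refine mul_le_mul ?_ ?_
            (Finset.prod_nonneg fun k _ => integral_nonneg (hφnn k)) (pow_nonneg hx.le _)
          · calc (∏ k ∈ K, (∫ u, φ k u)) ≤ ∏ k ∈ K, x := by
                    refine Finset.prod_le_prod (fun k _ => integral_nonneg (hφnn k))
                      (fun k hk => ?_)
                    have hlk : l ≤ (s k : ℕ) := by
                      rw [hK] at hk
                      exact (Finset.mem_filter.mp hk).2
                    simp only [hφ, if_pos hlk]
                    rw [MeasureTheory.integral_indicator measurableSet_Ioo]
                    calc (∫ u in Set.Ioo (0:ℝ) x, Real.exp (-u))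
                        ≤ ∫ _ in Set.Ioo (0:ℝ) x, (1:ℝ) := by
                          refine setIntegral_mono_on hexpIoo
                            (integrableOn_const hIoo_vol.ne) measurableSet_Ioo
                            (fun u hu => ?_)
                          rw [Real.exp_le_one_iff]
                          linarith [hu.1]
                      _ = x := by
                          rw [setIntegral_const, smul_eq_mul, mul_one, volume_real_Ioo_of_le hx.le,
                            sub_zero]
              _ = x ^ K.card := Finset.prod_const x
          · refine le_of_eq (Finset.prod_congr rfl fun k hk => ?_)
            have hlk : ¬ l ≤ (s k : ℕ) := by
              rw [hKc] at hk
              exact (Finset.mem_filter.mp hk).2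
            simp only [hφ, if_neg hlk]
            exact MeasureTheory.integral_indicator measurableSet_Ioi
      _ = Polynomial.eval x (Polynomial.C J * Polynomial.X ^ D) * Real.exp (-x) := by
          simp only [Polynomial.eval_mul, Polynomial.eval_C, Polynomial.eval_pow,
            Polynomial.eval_X, hD, hD0]
          rw [pow_add, pow_add]
          ring
end

section
/- Let K be a positive integer, let d be a non-negative integer, and let r be a multivariate polynomial in K real variables each of whose monomials with non-zero coefficient has total degree at least d. Then there exists a constant η > 0 such that for every ω ≥ 1, the absolute value of the Lebesgue integral of r(θ_1, …, θ_K) · exp(−ω (θ_1 + ⋯ + θ_K)) over the ordered cone {θ ∈ ℝ^K : θ_1 > θ_2 > ⋯ > θ_K > 0} is at most η · ω^{−(K + d)}. -/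
open MeasureTheory Real

lemma int1d (n : ℕ) :
    MeasureTheory.IntegrableOn (fun t : ℝ => t ^ n * Real.exp (-t)) (Set.Ioi 0) := by
  have h := Real.GammaIntegral_convergent (s := (n : ℝ) + 1) (by positivity)
  refine h.congr_fun ?_ measurableSet_Ioi
  intro x hx
  show Real.exp (-x) * x ^ ((n : ℝ) + 1 - 1) = x ^ n * Real.exp (-x)
  rw [add_sub_cancel_right, Real.rpow_natCast, mul_comm]

/-- if every monomial of the polynomial `r` in `K` variables has total
degree at least `d`, then there is `η > 0` such that for all `ω ≥ 1`, the absolute value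
of the integral of `r(θ) exp(−ω Σ θ_i)` over the ordered cone is at most
`η ω^{−(K + d)}`. -/
theorem polynomial_cone_integral_bound (K : ℕ) (hK : 0 < K) (d : ℕ)
    (r : MvPolynomial (Fin K) ℝ)
    (hr : ∀ m ∈ r.support, d ≤ m.sum fun _ e => e) :
    ∃ η : ℝ, 0 < η ∧ ∀ ω : ℝ, 1 ≤ ω →
      |∫ θ in {θ : Fin K → ℝ | StrictAnti θ ∧ ∀ i, 0 < θ i},
          MvPolynomial.eval θ r * Real.exp (-(ω * ∑ i, θ i))| ≤
        η * ω ^ (-((K : ℤ) + d)) := by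
  classical
  set C : Set (Fin K → ℝ) := {θ : Fin K → ℝ | StrictAnti θ ∧ ∀ i, 0 < θ i} with hCdef
  have hscale : ∀ (c : ℝ), 0 < c → ∀ θ : Fin K → ℝ, θ ∈ C → c • θ ∈ C := by
    intro c hc θ hθ
    refine ⟨fun i j hij => ?_, fun i => ?_⟩
    · simp only [Pi.smul_apply, smul_eq_mul]
      exact mul_lt_mul_of_pos_left (hθ.1 hij) hc
    · simp only [Pi.smul_apply, smul_eq_mul]
      exact mul_pos hc (hθ.2 i)
  have hscale_iff : ∀ (c : ℝ), 0 < c → ∀ θ : Fin K → ℝ, (c • θ ∈ C ↔ θ ∈ C) := by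
    intro c hc θ
    constructor
    · intro h
      have := hscale c⁻¹ (by positivity) _ h
      rwa [smul_smul, inv_mul_cancel₀ hc.ne', one_smul] at this
    · exact hscale c hc θ
  have hC : MeasurableSet C := by
    have hC1 : C = {θ : Fin K → ℝ | ∀ i j : Fin K, i < j → θ j < θ i} ∩
        ⋂ i, {θ : Fin K → ℝ | 0 < θ i} := by
      ext θ
      simp only [hCdef, Set.mem_setOf_eq, Set.mem_inter_iff, Set.mem_iInter, StrictAnti]
    have hC2 : {θ : Fin K → ℝ | ∀ i j : Fin K, i < j → θ j < θ i} =
        ⋂ (i : Fin K) (j : Fin K) (_ : i < j), {θ : Fin K → ℝ | θ j < θ i} := by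
      ext θ; simp
    rw [hC1, hC2]
    refine MeasurableSet.inter ?_
      (MeasurableSet.iInter fun i => measurableSet_lt measurable_const (measurable_pi_apply i))
    exact MeasurableSet.iInter fun i => MeasurableSet.iInter fun j =>
      MeasurableSet.iInter fun _ => measurableSet_lt (measurable_pi_apply j) (measurable_pi_apply i)
  set g : ℕ → ℝ → ℝ := fun n => Set.indicator (Set.Ioi 0) (fun t => t ^ n * Real.exp (-t))
    with hg
  have hgint : ∀ n, Integrable (g n) := fun n =>
    (integrable_indicator_iff measurableSet_Ioi).2 (int1d n)
  have hgnonneg : ∀ n t, 0 ≤ g n t := by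
    intro n t
    apply Set.indicator_nonneg
    intro x hx
    have : (0:ℝ) < x := hx
    positivity
  set T : (Fin K →₀ ℕ) → (Fin K → ℝ) → ℝ := fun m x => ∏ i, g (m i) (x i) with hT
  have hTint : ∀ m, Integrable (T m) := fun m => Integrable.fintype_prod (fun i => hgint (m i))
  have hTnonneg : ∀ m x, 0 ≤ T m x := fun m x => Finset.prod_nonneg fun i _ => hgnonneg _ _
  set G : (Fin K → ℝ) → ℝ := fun x => ∑ m ∈ r.support, |MvPolynomial.coeff m r| * T m x with hG
  have hGint : Integrable G := integrable_finset_sum _ (fun m _ => (hTint m).const_mul _)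
  have hGnonneg : ∀ x, 0 ≤ G x := fun x =>
    Finset.sum_nonneg fun m _ => mul_nonneg (abs_nonneg _) (hTnonneg m x)
  set S : ℝ := ∫ x, G x with hS
  have hSnonneg : 0 ≤ S := integral_nonneg hGnonneg
  refine ⟨S + 1, by linarith, ?_⟩
  intro ω hω
  have hω0 : (0:ℝ) < ω := lt_of_lt_of_le one_pos hω
  set H : (Fin K → ℝ) → ℝ :=
    fun x => |MvPolynomial.eval (ω⁻¹ • x) r| * Real.exp (-(∑ i, x i)) with hH
  have hkey : ∀ x, Set.indicator C H x ≤ ω⁻¹ ^ d * G x := by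
    intro x
    by_cases hx : x ∈ C
    · rw [Set.indicator_of_mem hx]
      have hxpos : ∀ i, 0 < x i := hx.2
      have h1 : |MvPolynomial.eval (ω⁻¹ • x) r| ≤
          ∑ m ∈ r.support, |MvPolynomial.coeff m r| * (ω⁻¹ ^ d * ∏ i, (x i) ^ (m i)) := by
        rw [MvPolynomial.eval_eq']
        refine (Finset.abs_sum_le_sum_abs _ _).trans ?_
        refine Finset.sum_le_sum fun m hm => ?_
        rw [abs_mul]
        refine mul_le_mul_of_nonneg_left ?_ (abs_nonneg _)
        have hprodnn : 0 ≤ ∏ i, (x i) ^ (m i) :=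
          Finset.prod_nonneg fun i _ => pow_nonneg (hxpos i).le _
        have heq : ∏ i, ((ω⁻¹ • x) i) ^ (m i) = ω⁻¹ ^ (∑ i, m i) * ∏ i, (x i) ^ (m i) := by
          simp only [Pi.smul_apply, smul_eq_mul, mul_pow]
          rw [Finset.prod_mul_distrib, Finset.prod_pow_eq_pow_sum]
        rw [heq, abs_of_nonneg (mul_nonneg (by positivity) hprodnn)]
        refine mul_le_mul_of_nonneg_right ?_ hprodnn
        refine pow_le_pow_of_le_one (by positivity) (inv_le_one_of_one_le₀ hω) ?_
        have hd := hr m hm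
        rwa [Finsupp.sum_fintype _ _ (fun _ => rfl)] at hd
      have hTx : ∀ m : Fin K →₀ ℕ,
          T m x = (∏ i, (x i) ^ (m i)) * Real.exp (-(∑ i, x i)) := by
        intro m
        have hgi : ∀ i, g (m i) (x i) = (x i) ^ (m i) * Real.exp (-(x i)) := fun i =>
          Set.indicator_of_mem (hxpos i) _
        simp only [hT]
        rw [Finset.prod_congr rfl (fun i _ => hgi i), Finset.prod_mul_distrib, ← Real.exp_sum]
        congr 2
        simp
      have hexp : (0:ℝ) < Real.exp (-(∑ i, x i)) := Real.exp_pos _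
      calc |MvPolynomial.eval (ω⁻¹ • x) r| * Real.exp (-(∑ i, x i))
          ≤ (∑ m ∈ r.support, |MvPolynomial.coeff m r| * (ω⁻¹ ^ d * ∏ i, (x i) ^ (m i))) *
            Real.exp (-(∑ i, x i)) := mul_le_mul_of_nonneg_right h1 hexp.le
        _ = ω⁻¹ ^ d * G x := by
            simp only [hG]
            rw [Finset.mul_sum, Finset.sum_mul]
            refine Finset.sum_congr rfl fun m _ => ?_
            rw [hTx m]; ring
    · rw [Set.indicator_of_notMem hx]
      exact mul_nonneg (by positivity) (hGnonneg x)
  have habs : |∫ θ in C, MvPolynomial.eval θ r * Real.exp (-(ω * ∑ i, θ i))| ≤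
      ∫ θ in C, |MvPolynomial.eval θ r| * Real.exp (-(ω * ∑ i, θ i)) := by
    simpa [Real.norm_eq_abs] using
      norm_integral_le_integral_norm (μ := volume.restrict C)
        (f := fun θ : Fin K → ℝ => MvPolynomial.eval θ r * Real.exp (-(ω * ∑ i, θ i)))
  have hindic : (fun θ : Fin K → ℝ =>
      Set.indicator C (fun θ : Fin K → ℝ =>
        |MvPolynomial.eval θ r| * Real.exp (-(ω * ∑ i, θ i))) θ) =
      fun θ : Fin K → ℝ => Set.indicator C H (ω • θ) := by
    funext θ
    by_cases hθ : θ ∈ C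
    · rw [Set.indicator_of_mem hθ, Set.indicator_of_mem ((hscale_iff ω hω0 θ).2 hθ)]
      simp only [hH]
      have hsum : (∑ i, (ω • θ) i) = ω * ∑ i, θ i := by
        simp [Finset.mul_sum]
      rw [smul_smul, inv_mul_cancel₀ hω0.ne', one_smul, hsum]
    · rw [Set.indicator_of_notMem hθ,
        Set.indicator_of_notMem (fun h => hθ ((hscale_iff ω hω0 θ).1 h))]
  have hcomp : ∫ θ in C, |MvPolynomial.eval θ r| * Real.exp (-(ω * ∑ i, θ i)) =
      (ω ^ K)⁻¹ * ∫ x, Set.indicator C H x := by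
    rw [← integral_indicator hC]
    calc ∫ θ, Set.indicator C (fun θ : Fin K → ℝ =>
            |MvPolynomial.eval θ r| * Real.exp (-(ω * ∑ i, θ i))) θ
        = ∫ θ, Set.indicator C H (ω • θ) := by rw [hindic]
      _ = |(ω ^ Module.finrank ℝ (Fin K → ℝ))⁻¹| • ∫ x, Set.indicator C H x :=
          Measure.integral_comp_smul volume (Set.indicator C H) ω
      _ = (ω ^ K)⁻¹ * ∫ x, Set.indicator C H x := by
          rw [Module.finrank_fin_fun, abs_of_pos (by positivity), smul_eq_mul]
  have hmono : ∫ x, Set.indicator C H x ≤ ω⁻¹ ^ d * S := by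
    have hmul : ∫ x, ω⁻¹ ^ d * G x = ω⁻¹ ^ d * S := integral_const_mul _ _
    rw [← hmul]
    refine integral_mono_of_nonneg ?_ (hGint.const_mul _) ?_
    · exact Filter.Eventually.of_forall fun x =>
        Set.indicator_nonneg (fun y _ => mul_nonneg (abs_nonneg _) (Real.exp_pos _).le) x
    · exact Filter.Eventually.of_forall hkey
  calc |∫ θ in C, MvPolynomial.eval θ r * Real.exp (-(ω * ∑ i, θ i))|
      ≤ ∫ θ in C, |MvPolynomial.eval θ r| * Real.exp (-(ω * ∑ i, θ i)) := habs
    _ = (ω ^ K)⁻¹ * ∫ x, Set.indicator C H x := hcomp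
    _ ≤ (ω ^ K)⁻¹ * (ω⁻¹ ^ d * S) := mul_le_mul_of_nonneg_left hmono (by positivity)
    _ ≤ (S + 1) * ω ^ (-((K : ℤ) + d)) := by
        rw [zpow_neg, zpow_add₀ hω0.ne', zpow_natCast, zpow_natCast, mul_inv, inv_pow]
        have heq : (ω ^ K)⁻¹ * ((ω ^ d)⁻¹ * S) = S * ((ω ^ K)⁻¹ * (ω ^ d)⁻¹) := by ring
        rw [heq]
        exact mul_le_mul_of_nonneg_right (by linarith) (by positivity)
end

section
/- Let N and M be positive integers, X = max(N, M), Y = min(N, M). Let α_1, …, α_Y be non-negative reals, not all zero; let p_1 be the smallest index j with α_j > 0, and let α_min be the minimum of the non-zero α_j's. Then there exists a constant η > 0 such that for every γ > 0, the Lebesgue integral of exp(−γ Σ_{j=1}^Y α_j μ_j) · ψ(μ_1, …, μ_Y) · exp(−Σ_{j=1}^Y μ_j) over the ordered domain {μ ∈ ℝ^Y : μ_1 > μ_2 > ⋯ > μ_Y > 0} is at most η · (γ α_min)^{−(N − p_1 + 1)(M − p_1 + 1)}. -/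
open MeasureTheory Real Finset


lemma integrableOn_aux (e : ℕ) {r : ℝ} (hr : 0 < r) :
    IntegrableOn (fun t : ℝ => t ^ e * Real.exp (-(r * t))) (Set.Ioi 0) := by
  have h := integrableOn_rpow_mul_exp_neg_mul_rpow (p := 1) (s := (e : ℝ)) (b := r)
    (by exact_mod_cast neg_one_lt_zero.trans_le (Nat.cast_nonneg e)) zero_lt_one hr
  simpa [Real.rpow_natCast, Real.rpow_one] using h

lemma integral_aux (e : ℕ) {r : ℝ} (hr : 0 < r) :
    ∫ t in Set.Ioi (0:ℝ), t ^ e * Real.exp (-(r * t)) = (e.factorial : ℝ) / r ^ (e + 1) := by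
  have h := Real.integral_rpow_mul_exp_neg_mul_Ioi (a := (e : ℝ) + 1) (r := r)
    (by positivity) hr
  have h1 : ∀ t : ℝ, t ^ ((e : ℝ) + 1 - 1) = t ^ e := by
    intro t; rw [add_sub_cancel_right, Real.rpow_natCast]
  simp_rw [h1] at h
  rw [h, Real.Gamma_nat_eq_factorial]
  have h2 : ((e : ℝ) + 1) = ((e + 1 : ℕ) : ℝ) := by push_cast; ring
  rw [h2, Real.rpow_natCast, div_pow, one_pow]
  ring

lemma sum_aux (X Y p : ℕ) (hpY : p < Y) (hYX : Y ≤ X) :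
    ∑ n ∈ Finset.Ico p Y, (X - Y + 2 * (Y - 1 - n) + 1) = (Y - p) * (X - p) := by
  obtain ⟨q, hq⟩ : ∃ q, Y - p = q + 1 := ⟨Y - p - 1, by omega⟩
  rw [Finset.sum_Ico_eq_sum_range]
  have h1 : ∀ k ∈ Finset.range (Y - p), X - Y + 2 * (Y - 1 - (p + k)) + 1
      = (X - Y + 1) + 2 * ((Y - p) - 1 - k) := by intro k hk; simp at hk; omega
  rw [Finset.sum_congr rfl h1, Finset.sum_add_distrib, Finset.sum_const, ← Finset.mul_sum,
    Finset.sum_range_reflect (fun i => i) (Y - p), Finset.card_range, smul_eq_mul]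
  have h2 := Finset.sum_range_id_mul_two (Y - p)
  have h3 : (Y - p) * (X - Y + 1) + (Y - p) * ((Y - p) - 1) = (Y - p) * (X - p) := by
    rw [← Nat.mul_add]; congr 1; omega
  omega

/-- with non-negative weights `α`, not all zero, `p1` the smallest index
with `α p1 > 0` and `αmin` the minimum of the non-zero weights, there is `η > 0` such that
for all `γ > 0` the integral of `exp(−γ Σ_j α_j μ_j) ψ(μ) e^{−Σ_j μ_j}` over the ordered
domain is at most `η (γ αmin)^{−(N − p₁ + 1)(M − p₁ + 1)}` (with 0-based `p1`, the
exponent is `(N − p1)(M − p1)`). -/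
theorem pep_diversity_bound (N M : ℕ) (hN : 0 < N) (hM : 0 < M)
    (α : Fin (min N M) → ℝ) (hα : ∀ j, 0 ≤ α j)
    (p1 : Fin (min N M)) (hp1 : 0 < α p1) (hp1min : ∀ j, 0 < α j → p1 ≤ j)
    (αmin : ℝ) (hminle : ∀ j, α j ≠ 0 → αmin ≤ α j)
    (hminmem : ∃ j, α j ≠ 0 ∧ α j = αmin) :
    ∃ η : ℝ, 0 < η ∧ ∀ γ : ℝ, 0 < γ →
      (∫ μ in {μ : Fin (min N M) → ℝ | StrictAnti μ ∧ ∀ i, 0 < μ i},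
          Real.exp (-(γ * ∑ j, α j * μ j)) * psi N M μ * Real.exp (-∑ j, μ j)) ≤
        η * (γ * αmin) ^ (-(((N - (p1 : ℕ)) * (M - (p1 : ℕ)) : ℕ) : ℤ)) := by
  classical
  obtain ⟨j0, hj0ne, hj0eq⟩ := hminmem
  have hαmin : 0 < αmin := by
    rcases (hα j0).lt_or_eq with h | h
    · exact hj0eq ▸ h
    · exact absurd h.symm hj0ne
  have hYX : min N M ≤ max N M := min_le_max
  have hpY : (p1 : ℕ) < min N M := p1.isLt
  set d : Fin (min N M) → ℕ :=
    fun i => (max N M - min N M) + 2 * (min N M - 1 - (i : ℕ)) with hd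
  set Q : ℕ := min N M - (p1 : ℕ) with hQdef
  have hQ : 0 < Q := by omega
  set k : ℕ := (N - (p1 : ℕ)) * (M - (p1 : ℕ)) with hkdef
  have hk : k = (min N M - (p1 : ℕ)) * (max N M - (p1 : ℕ)) := by
    obtain ⟨p, hp⟩ : ∃ p, (p1 : ℕ) = p := ⟨_, rfl⟩
    rw [hkdef, hp]
    rcases le_total N M with h | h
    · rw [min_eq_left h, max_eq_right h]
    · rw [min_eq_right h, max_eq_left h, Nat.mul_comm]
  -- the exponent sum identity
  have hksum : (∑ i : Fin (min N M), if p1 ≤ i then d i + 1 else 0) = k := by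
    have hstep1 : (∑ i : Fin (min N M), if p1 ≤ i then d i + 1 else 0)
        = ∑ n ∈ Finset.range (min N M), (if (p1 : ℕ) ≤ n then
            (max N M - min N M + 2 * (min N M - 1 - n) + 1) else 0) := by
      rw [← Fin.sum_univ_eq_sum_range]
      refine Finset.sum_congr rfl fun i _ => ?_
      simp only [hd, Fin.le_def]
    rw [hstep1, ← Finset.sum_filter]
    have hfil : (Finset.range (min N M)).filter (fun n => (p1 : ℕ) ≤ n)
        = Finset.Ico (p1 : ℕ) (min N M) := by
      ext n; simp only [Finset.mem_filter, Finset.mem_range, Finset.mem_Ico]; omega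
    rw [hfil, sum_aux _ _ _ hpY hYX, ← hk]
  refine ⟨(∏ i, ((d i).factorial : ℝ)) * (Q : ℝ) ^ k, by positivity, ?_⟩
  intro γ hγ
  have hQR : (0:ℝ) < (Q : ℝ) := by exact_mod_cast hQ
  set c : ℝ := γ * αmin / Q with hc
  have hcpos : 0 < c := by positivity
  set ci : Fin (min N M) → ℝ := fun i => if p1 ≤ i then c else 0 with hci
  have hci0 : ∀ i, 0 ≤ ci i := by intro i; rw [hci]; dsimp only; split <;> [exact hcpos.le; rfl]
  have h1ci : ∀ i, 0 < 1 + ci i := fun i => by have := hci0 i; linarith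
  set g : Fin (min N M) → ℝ → ℝ :=
    fun i => (Set.Ioi (0:ℝ)).indicator (fun t => t ^ d i * Real.exp (-((1 + ci i) * t))) with hg
  have hgnn : ∀ i t, 0 ≤ g i t := by
    intro i t
    rw [hg]
    apply Set.indicator_nonneg
    intro x hx
    exact mul_nonneg (pow_nonneg (le_of_lt hx) _) (Real.exp_nonneg _)
  have hgint : ∀ i, Integrable (g i) :=
    fun i => (integrableOn_aux (d i) (h1ci i)).integrable_indicator measurableSet_Ioi
  set G : (Fin (min N M) → ℝ) → ℝ := fun μ => ∏ i, g i (μ i) with hG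
  have hGint : Integrable G := Integrable.fintype_prod hgint
  have hGnn : ∀ μ, 0 ≤ G μ := fun μ => Finset.prod_nonneg fun i _ => hgnn i (μ i)
  set S := {μ : Fin (min N M) → ℝ | StrictAnti μ ∧ ∀ i, 0 < μ i} with hSdef
  have hSm : MeasurableSet S := by
    have h1 : S = {μ : Fin (min N M) → ℝ | ∀ i j : Fin (min N M), i < j → μ j < μ i}
        ∩ ⋂ i, {μ | 0 < μ i} := by
      ext μ
      simp only [hSdef, Set.mem_setOf_eq, Set.mem_inter_iff, Set.mem_iInter]
      exact ⟨fun ⟨h, h'⟩ => ⟨fun i j hij => h hij, h'⟩, fun ⟨h, h'⟩ => ⟨fun i j hij => h i j hij, h'⟩⟩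
    rw [h1]
    apply MeasurableSet.inter
    · have h2 : {μ : Fin (min N M) → ℝ | ∀ i j : Fin (min N M), i < j → μ j < μ i}
          = ⋂ i, ⋂ j, ⋂ (_ : i < j), {μ : Fin (min N M) → ℝ | μ j < μ i} := by
        ext μ; simp
      rw [h2]
      exact MeasurableSet.iInter fun i => MeasurableSet.iInter fun j =>
        MeasurableSet.iInter fun _ =>
          measurableSet_lt (measurable_pi_apply j) (measurable_pi_apply i)
    · exact MeasurableSet.iInter fun i =>
        measurableSet_lt measurable_const (measurable_pi_apply i)
  set F : (Fin (min N M) → ℝ) → ℝ := fun μ =>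
    Real.exp (-(γ * ∑ j, α j * μ j)) * psi N M μ * Real.exp (-∑ j, μ j) with hF
  have hFc : Continuous F := by
    rw [hF]; unfold psi; fun_prop
  -- key pointwise bound on S
  have hpsinn : ∀ μ ∈ S, 0 ≤ psi N M μ := by
    rintro μ ⟨hanti, hpos⟩
    unfold psi
    exact mul_nonneg (Finset.prod_nonneg fun i _ => pow_nonneg (hpos i).le _)
      (Finset.prod_nonneg fun i _ => Finset.prod_nonneg fun j _ => sq_nonneg _)
  have hkey : ∀ μ ∈ S, F μ ≤ G μ := by
    rintro μ hμS
    obtain ⟨hanti, hpos⟩ := hμS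
    have hGval : G μ = ((∏ i, μ i ^ d i) * Real.exp (-(∑ i, ci i * μ i)))
        * Real.exp (-∑ i, μ i) := by
      rw [hG]
      dsimp only
      rw [Finset.prod_congr rfl (fun i _ => Set.indicator_of_mem (Set.mem_Ioi.mpr (hpos i)) _),
        Finset.prod_mul_distrib, ← Real.exp_sum]
      have h7 : ∑ i, -((1 + ci i) * μ i) = -(∑ i, ci i * μ i) + -(∑ i, μ i) := by
        rw [← neg_add, ← Finset.sum_add_distrib, ← Finset.sum_neg_distrib]
        exact Finset.sum_congr rfl fun i _ => by ring
      rw [h7, Real.exp_add, ← mul_assoc]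
    rw [hGval, hF]
    dsimp only
    apply mul_le_mul_of_nonneg_right _ (Real.exp_nonneg _)
    -- psi bound
    have hpsi : psi N M μ ≤ ∏ i, μ i ^ d i := by
      unfold psi
      have hstep : ∀ i : Fin (min N M),
          ∏ j ∈ Finset.Ioi i, (μ i - μ j) ^ 2 ≤ μ i ^ (2 * (min N M - 1 - (i : ℕ))) := by
        intro i
        calc ∏ j ∈ Finset.Ioi i, (μ i - μ j) ^ 2
            ≤ ∏ j ∈ Finset.Ioi i, (μ i) ^ 2 := by
              apply Finset.prod_le_prod (fun j _ => sq_nonneg _)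
              intro j hj
              have hij : i < j := Finset.mem_Ioi.mp hj
              have h1 : μ j < μ i := hanti hij
              have h2 : 0 < μ j := hpos j
              nlinarith
          _ = μ i ^ (2 * (min N M - 1 - (i : ℕ))) := by
              rw [Finset.prod_const, Fin.card_Ioi, ← pow_mul]
      calc (∏ i, μ i ^ (max N M - min N M)) * ∏ i, ∏ j ∈ Finset.Ioi i, (μ i - μ j) ^ 2
          ≤ (∏ i, μ i ^ (max N M - min N M))
              * ∏ i, μ i ^ (2 * (min N M - 1 - (i : ℕ))) := by
            refine mul_le_mul_of_nonneg_left
              (Finset.prod_le_prod (fun i _ => Finset.prod_nonneg fun j _ => sq_nonneg _)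
                (fun i _ => hstep i))
              (Finset.prod_nonneg fun i _ => pow_nonneg (hpos i).le _)
        _ = ∏ i, μ i ^ d i := by
            rw [← Finset.prod_mul_distrib]
            exact Finset.prod_congr rfl fun i _ => (pow_add _ _ _).symm
    -- exponential bound
    have hexp : (∑ i, ci i * μ i) ≤ γ * ∑ j, α j * μ j := by
      have hsum1 : (∑ i, ci i * μ i)
          = ∑ i ∈ Finset.filter (fun i => p1 ≤ i) Finset.univ, c * μ i := by
        rw [Finset.sum_filter]
        refine Finset.sum_congr rfl fun i _ => ?_
        rw [hci]; dsimp only; split <;> simp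
      have hcard : (Finset.filter (fun i => p1 ≤ i) Finset.univ).card = Q := by
        have h4 : Finset.filter (fun i => p1 ≤ i) Finset.univ = Finset.Ici p1 := by
          ext i; simp
        rw [h4, Fin.card_Ici]
      calc (∑ i, ci i * μ i)
          ≤ (Finset.filter (fun i => p1 ≤ i) Finset.univ).card • (c * μ p1) := by
            rw [hsum1]
            exact Finset.sum_le_card_nsmul _ _ _ fun i hi =>
              mul_le_mul_of_nonneg_left (hanti.antitone (Finset.mem_filter.mp hi).2) hcpos.le
        _ = γ * αmin * μ p1 := by
            rw [hcard, nsmul_eq_mul, hc]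
            field_simp
        _ ≤ γ * (α p1 * μ p1) := by
            have h5 := hminle p1 hp1.ne'
            have h6 := hpos p1
            rw [mul_assoc]
            exact mul_le_mul_of_nonneg_left
              (mul_le_mul_of_nonneg_right h5 h6.le) hγ.le
        _ ≤ γ * ∑ j, α j * μ j := by
            refine mul_le_mul_of_nonneg_left ?_ hγ.le
            exact Finset.single_le_sum (f := fun j => α j * μ j)
              (fun j _ => mul_nonneg (hα j) (hpos j).le) (Finset.mem_univ p1)
    calc Real.exp (-(γ * ∑ j, α j * μ j)) * psi N M μ
        ≤ Real.exp (-(∑ i, ci i * μ i)) * (∏ i, μ i ^ d i) := by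
          refine mul_le_mul (Real.exp_le_exp.mpr (neg_le_neg hexp)) hpsi
            (hpsinn μ ⟨hanti, hpos⟩) (Real.exp_nonneg _)
      _ = (∏ i, μ i ^ d i) * Real.exp (-(∑ i, ci i * μ i)) := mul_comm _ _
  -- indicator bounds and integrability
  have hFnn : ∀ μ ∈ S, 0 ≤ F μ := by
    intro μ hμ
    rw [hF]
    exact mul_nonneg (mul_nonneg (Real.exp_nonneg _) (hpsinn μ hμ)) (Real.exp_nonneg _)
  have hle : ∀ μ, S.indicator F μ ≤ G μ := by
    intro μ
    by_cases hμ : μ ∈ S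
    · rw [Set.indicator_of_mem hμ]; exact hkey μ hμ
    · rw [Set.indicator_of_notMem hμ]; exact hGnn μ
  have hnn : ∀ μ, 0 ≤ S.indicator F μ := fun μ => Set.indicator_nonneg hFnn μ
  have hind : Integrable (S.indicator F) := by
    refine hGint.mono' ((hFc.measurable.indicator hSm).aestronglyMeasurable) ?_
    filter_upwards with μ
    rw [Real.norm_eq_abs, abs_of_nonneg (hnn μ)]
    exact hle μ
  -- per-factor bound on the 1-d integrals
  have hfac : ∀ i : Fin (min N M), ((d i).factorial : ℝ) / (1 + ci i) ^ (d i + 1)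
      ≤ ((d i).factorial : ℝ) * (c⁻¹) ^ (if p1 ≤ i then d i + 1 else 0) := by
    intro i
    by_cases h : p1 ≤ i
    · rw [hci]; dsimp only; rw [if_pos h, if_pos h, inv_pow, ← div_eq_mul_inv]
      apply div_le_div_of_nonneg_left (by positivity) (by positivity)
      exact pow_le_pow_left₀ hcpos.le (by linarith) _
    · rw [hci]; dsimp only; rw [if_neg h, if_neg h]
      norm_num
  -- main calc
  calc (∫ μ in S, F μ)
      = ∫ μ, S.indicator F μ := (integral_indicator hSm).symm
    _ ≤ ∫ μ, G μ := integral_mono hind hGint hle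
    _ = ∏ i, ∫ t, g i t := by
        rw [hG]; exact MeasureTheory.integral_fintype_prod_eq_prod g
    _ = ∏ i, ((d i).factorial : ℝ) / (1 + ci i) ^ (d i + 1) := by
        refine Finset.prod_congr rfl fun i _ => ?_
        rw [hg]
        dsimp only
        rw [integral_indicator measurableSet_Ioi]
        exact integral_aux (d i) (h1ci i)
    _ ≤ ∏ i, ((d i).factorial : ℝ) * (c⁻¹) ^ (if p1 ≤ i then d i + 1 else 0) :=
        Finset.prod_le_prod (fun i _ => by positivity) (fun i _ => hfac i)
    _ = (∏ i, ((d i).factorial : ℝ)) * (c⁻¹) ^ k := by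
        rw [Finset.prod_mul_distrib, Finset.prod_pow_eq_pow_sum, hksum]
    _ = (∏ i, ((d i).factorial : ℝ)) * (Q : ℝ) ^ k * (γ * αmin) ^ (-(k : ℤ)) := by
        have hcinv : c⁻¹ = (Q : ℝ) * (γ * αmin)⁻¹ := by
          rw [hc]; field_simp
        rw [hcinv, mul_pow, zpow_neg, zpow_natCast, inv_pow]
        ring
end
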